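/- Let c, h ≥ 0, a ∈ ℝ, and let μ₂ be a real zero of χ_κ(z) = z² − cz − 1 + a e^{−zch}. Define the operators (Dy)(t) = y''(t) − cy'(t) − y(t) + a y(t−ch), (D₁y)(t) = y'(t) − μ₂ y(t), and (D₂y)(t) = y'(t) − (c−μ₂)y(t) − a e^{−chμ₂} ∫_{−ch}^{0} e^{−μ₂ s} y(t+s) ds. Then D₁ and D₂ commute and Dy = D₁D₂y = D₂D₁y for every y ∈ C²(ℝ,ℝ). -/

import Mathlib

open Filter Set intervalIntegral

noncomputable section

/-- The second-order delayed differential operator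
`(Dy)(t) = y''(t) - cy'(t) - y(t) + a y(t-ch)`. -/
def Dop (c h a : ℝ) (y : ℝ → ℝ) (t : ℝ) : ℝ :=
  deriv (deriv y) t - c * deriv y t - y t + a * y (t - c * h)

/-- The first-order factor `(D₁y)(t) = y'(t) - μ₂ y(t)`. -/
def D1op (μ₂ : ℝ) (y : ℝ → ℝ) (t : ℝ) : ℝ :=
  deriv y t - μ₂ * y t

/-- The integro-differential factor
`(D₂y)(t) = y'(t) - (c-μ₂)y(t) - a e^{-chμ₂} ∫_{-ch}^0 e^{-μ₂ s} y(t+s) ds`. -/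
def D2op (c h a μ₂ : ℝ) (y : ℝ → ℝ) (t : ℝ) : ℝ :=
  deriv y t - (c - μ₂) * y t -
    a * Real.exp (-(c * h * μ₂)) * ∫ s in (-(c * h))..(0 : ℝ), Real.exp (-(μ₂ * s)) * y (t + s)

/-- If `μ₂` is a real zero of `χ_κ(z) = z² - cz - 1 + a e^{-zch}`, the operators `D₁`
and `D₂` commute and `Dy = D₁D₂y = D₂D₁y` for every `y ∈ C²(ℝ,ℝ)`. -/
theorem operators_factorize_commute
    (c h a μ₂ : ℝ) (hc : 0 ≤ c) (hh : 0 ≤ h)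
    (hμ₂ : μ₂ ^ 2 - c * μ₂ - 1 + a * Real.exp (-(μ₂ * c * h)) = 0)
    (y : ℝ → ℝ) (hy : ContDiff ℝ 2 y) :
    (∀ t : ℝ, D1op μ₂ (D2op c h a μ₂ y) t = Dop c h a y t) ∧
    (∀ t : ℝ, D2op c h a μ₂ (D1op μ₂ y) t = Dop c h a y t) ∧
    (∀ t : ℝ, D1op μ₂ (D2op c h a μ₂ y) t = D2op c h a μ₂ (D1op μ₂ y) t) := by
  -- basic differentiability facts
  have hy2 : ContDiff ℝ 1 (deriv y) := by
    have := (contDiff_succ_iff_deriv (n := 1)).mp (by exact_mod_cast hy)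
    exact this.2.2
  have h1 : Differentiable ℝ y := hy.differentiable two_ne_zero
  have h2 : Differentiable ℝ (deriv y) := hy2.differentiable one_ne_zero
  have hy' : ∀ t, HasDerivAt y (deriv y t) t := fun t => (h1 t).hasDerivAt
  have hy'' : ∀ t, HasDerivAt (deriv y) (deriv (deriv y) t) t := fun t => (h2 t).hasDerivAt
  have hycont : Continuous y := h1.continuous
  have hy'cont : Continuous (deriv y) := h2.continuous
  set A : ℝ := Real.exp (-(μ₂ * c * h)) with hA
  set E : ℝ := Real.exp (μ₂ * (c * h)) with hE
  have hAE : A * E = 1 := by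
    rw [hA, hE, ← Real.exp_add, show -(μ₂ * c * h) + μ₂ * (c * h) = 0 by ring, Real.exp_zero]
  -- the auxiliary integral
  set g : ℝ → ℝ := fun x => Real.exp (-(μ₂ * x)) * y x with hg
  have hgcont : Continuous g := by continuity
  set F : ℝ → ℝ := fun t => ∫ x in (0:ℝ)..t, g x with hFdef
  have hF : ∀ t, HasDerivAt F (g t) t := fun t =>
    intervalIntegral.integral_hasDerivAt_right (hgcont.intervalIntegrable _ _)
      hgcont.aestronglyMeasurable.stronglyMeasurableAtFilter hgcont.continuousAt
  set I : ℝ → ℝ := fun t => ∫ s in (-(c * h))..(0:ℝ), Real.exp (-(μ₂ * s)) * y (t + s) with hIdef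
  have hIeq : ∀ t, I t = Real.exp (μ₂ * t) * (F t - F (t - c * h)) := by
    intro t
    have h1' : ∀ s : ℝ, Real.exp (-(μ₂ * s)) * y (t + s)
        = (fun x => Real.exp (-(μ₂ * (x - t))) * y x) (s + t) := by
      intro s; simp [add_comm, add_sub_cancel_right]
    have := intervalIntegral.integral_comp_add_right
      (a := -(c * h)) (b := (0:ℝ)) (fun x => Real.exp (-(μ₂ * (x - t))) * y x) t
    calc I t = ∫ s in (-(c * h))..(0:ℝ),
          (fun x => Real.exp (-(μ₂ * (x - t))) * y x) (s + t) := by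
          simp only [hIdef]; exact intervalIntegral.integral_congr fun s _ => h1' s
      _ = ∫ x in (-(c * h) + t)..((0:ℝ) + t), Real.exp (-(μ₂ * (x - t))) * y x := this
      _ = ∫ x in (t - c * h)..t, Real.exp (μ₂ * t) * g x := by
          rw [show -(c * h) + t = t - c * h by ring, zero_add]
          refine intervalIntegral.integral_congr fun x _ => ?_
          show Real.exp (-(μ₂ * (x - t))) * y x
            = Real.exp (μ₂ * t) * (Real.exp (-(μ₂ * x)) * y x)
          rw [← mul_assoc, ← Real.exp_add,
            show μ₂ * t + -(μ₂ * x) = -(μ₂ * (x - t)) by ring]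
      _ = Real.exp (μ₂ * t) * ∫ x in (t - c * h)..t, g x := by
          rw [intervalIntegral.integral_const_mul]
      _ = Real.exp (μ₂ * t) * (F t - F (t - c * h)) := by
          rw [hFdef]
          rw [intervalIntegral.integral_interval_sub_left
            (hgcont.intervalIntegrable _ _) (hgcont.intervalIntegrable _ _)]
  have hI : ∀ t, HasDerivAt I (μ₂ * I t + y t - E * y (t - c * h)) t := by
    intro t
    have hFt : HasDerivAt (fun u => F u - F (u - c * h)) (g t - g (t - c * h)) t := by
      have h2' : HasDerivAt (fun u => F (u - c * h)) (g (t - c * h)) t := by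
        have := (hF (t - c * h)).comp t ((hasDerivAt_id t).sub_const (c * h))
        rw [mul_one] at this; exact this
      exact (hF t).sub h2'
    have hexp : HasDerivAt (fun u => Real.exp (μ₂ * u)) (Real.exp (μ₂ * t) * μ₂) t := by
      have := ((hasDerivAt_id t).const_mul μ₂).exp
      simpa using this
    have hmul := hexp.mul hFt
    have key : HasDerivAt (fun u => Real.exp (μ₂ * u) * (F u - F (u - c * h)))
        (μ₂ * I t + y t - E * y (t - c * h)) t := by
      refine hmul.congr_deriv (Eq.symm ?_)
      rw [hIeq t, hg, hE]
      simp only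
      have e1 : Real.exp (μ₂ * t) * Real.exp (-(μ₂ * t)) = 1 := by
        rw [← Real.exp_add, show μ₂ * t + -(μ₂ * t) = 0 by ring, Real.exp_zero]
      have e2 : Real.exp (μ₂ * t) * Real.exp (-(μ₂ * (t - c * h)))
          = Real.exp (μ₂ * (c * h)) := by
        rw [← Real.exp_add]; congr 1; ring
      linear_combination (-(y t)) * e1 + y (t - c * h) * e2
    have hfun : I = fun u => Real.exp (μ₂ * u) * (F u - F (u - c * h)) := funext hIeq
    rwa [← hfun] at key
  -- derivative of D2op y
  have hD2 : ∀ t, HasDerivAt (D2op c h a μ₂ y)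
      (deriv (deriv y) t - (c - μ₂) * deriv y t
        - a * A * (μ₂ * I t + y t - E * y (t - c * h))) t := by
    intro t
    have : D2op c h a μ₂ y = fun t => deriv y t - (c - μ₂) * y t - a * A * I t := by
      funext u
      simp only [D2op, hIdef, hA]
      rw [show -(c * h * μ₂) = -(μ₂ * c * h) by ring]
    rw [this]
    exact ((hy'' t).sub ((hy' t).const_mul (c - μ₂))).sub ((hI t).const_mul (a * A))
  -- the integral for D2op (D1op y)
  have hJ : ∀ t, (∫ s in (-(c * h))..(0:ℝ), Real.exp (-(μ₂ * s)) * (D1op μ₂ y) (t + s))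
      = y t - E * y (t - c * h) := by
    intro t
    have hder : ∀ s : ℝ, HasDerivAt (fun s => Real.exp (-(μ₂ * s)) * y (t + s))
        (Real.exp (-(μ₂ * s)) * (D1op μ₂ y) (t + s)) s := by
      intro s
      have he : HasDerivAt (fun s : ℝ => Real.exp (-(μ₂ * s)))
          (Real.exp (-(μ₂ * s)) * (-μ₂)) s := by
        have := (((hasDerivAt_id s).const_mul μ₂).neg).exp
        simpa using this
      have hys : HasDerivAt (fun s => y (t + s)) (deriv y (t + s)) s := by
        have := (hy' (t + s)).comp s ((hasDerivAt_id s).const_add t)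
        rw [mul_one] at this; exact this
      have := he.mul hys
      refine this.congr_deriv (Eq.symm ?_)
      simp only [D1op]; ring
    have hcont : Continuous fun s => Real.exp (-(μ₂ * s)) * (D1op μ₂ y) (t + s) := by
      simp only [D1op]
      fun_prop
    rw [intervalIntegral.integral_eq_sub_of_hasDerivAt (fun s _ => hder s)
      (hcont.intervalIntegrable _ _)]
    simp only [mul_zero, neg_zero, Real.exp_zero, add_zero, one_mul]
    rw [show t + -(c * h) = t - c * h by ring,
      show -(μ₂ * -(c * h)) = μ₂ * (c * h) by ring, hE]
  -- part 1
  have p1 : ∀ t : ℝ, D1op μ₂ (D2op c h a μ₂ y) t = Dop c h a y t := by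
    intro t
    have hd := (hD2 t).deriv
    have hIt : (∫ s in (-(c * h))..(0:ℝ), Real.exp (-(μ₂ * s)) * y (t + s)) = I t := rfl
    simp only [D1op, Dop, hd, D2op, hIt]
    rw [show -(c * h * μ₂) = -(μ₂ * c * h) by ring, ← hA]
    linear_combination (-(y t)) * hμ₂ + a * y (t - c * h) * hAE
  refine ⟨p1, ?_⟩
  have p2 : ∀ t : ℝ, D2op c h a μ₂ (D1op μ₂ y) t = Dop c h a y t := by
    intro t
    have hd1 : deriv (D1op μ₂ y) t = deriv (deriv y) t - μ₂ * deriv y t := by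
      have : HasDerivAt (D1op μ₂ y) (deriv (deriv y) t - μ₂ * deriv y t) t :=
        (hy'' t).sub ((hy' t).const_mul μ₂)
      exact this.deriv
    have e0 : D2op c h a μ₂ (D1op μ₂ y) t
        = deriv (D1op μ₂ y) t - (c - μ₂) * D1op μ₂ y t
          - a * Real.exp (-(c * h * μ₂)) * (y t - E * y (t - c * h)) := by
      simp only [D2op]; rw [hJ t]
    rw [e0, hd1]
    simp only [D1op, Dop]
    rw [show -(c * h * μ₂) = -(μ₂ * c * h) by ring, ← hA]
    linear_combination (-(y t)) * hμ₂ + a * y (t - c * h) * hAE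
  exact ⟨p2, fun t => (p1 t).trans (p2 t).symm⟩
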